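/- arXiv:1910.11055 — 5 statements merged into one kernel-verified Lean document; each statement's English description precedes it below -/
import Mathlib

section
/- Let E be a vector lattice with the principal projection property, F a vector lattice, Φ : 𝔅(E) → 𝔅(F) a Boolean homomorphism, and T : E → F atomic subordinate to Φ. Then T is disjointness preserving: for all x, y ∈ E, x ⊥ y implies T x ⊥ T y. -/
namespace VL

/-- Two elements of a vector lattice are disjoint if `|x| ⊓ |y| = 0`. -/
def VDisjoint {G : Type*} [Lattice G] [AddCommGroup G] (x y : G) : Prop :=
  |x| ⊓ |y| = 0

/-- `y` is a fragment of `x` if `y ⊥ (x - y)`. -/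
def Fragment {G : Type*} [Lattice G] [AddCommGroup G] (y x : G) : Prop :=
  VDisjoint y (x - y)

/-- An order projection: a linear idempotent `π` with `0 ≤ π x ≤ x` for all `x ≥ 0`. -/
def IsOrderProjection {G : Type*} [Lattice G] [AddCommGroup G] [Module ℝ G]
    (π : G →ₗ[ℝ] G) : Prop :=
  (∀ x, π (π x) = π x) ∧ ∀ x : G, 0 ≤ x → 0 ≤ π x ∧ π x ≤ x

/-- A map between the order projections of `E` and of `F` is a Boolean homomorphism if it
maps order projections to order projections and preserves the Boolean operations
`π ∧ ρ = π ∘ ρ`, `π ∨ ρ = π + ρ - π ∘ ρ` and `compl π = Id - π`. -/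
def IsBooleanHom {E F : Type*} [Lattice E] [AddCommGroup E] [Module ℝ E]
    [Lattice F] [AddCommGroup F] [Module ℝ F]
    (Φ : (E →ₗ[ℝ] E) → (F →ₗ[ℝ] F)) : Prop :=
  (∀ π, IsOrderProjection π → IsOrderProjection (Φ π)) ∧
  (∀ π ρ, IsOrderProjection π → IsOrderProjection ρ →
    Φ (π ∘ₗ ρ) = Φ π ∘ₗ Φ ρ) ∧
  (∀ π ρ, IsOrderProjection π → IsOrderProjection ρ →
    Φ (π + ρ - π ∘ₗ ρ) = Φ π + Φ ρ - Φ π ∘ₗ Φ ρ) ∧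
  (∀ π, IsOrderProjection π → Φ (LinearMap.id - π) = LinearMap.id - Φ π)

/-- `T` is atomic subordinate to `Φ` if `T (π x) = Φ(π) (T x)` for every order projection. -/
def IsAtomic {E F : Type*} [Lattice E] [AddCommGroup E] [Module ℝ E]
    [Lattice F] [AddCommGroup F] [Module ℝ F]
    (Φ : (E →ₗ[ℝ] E) → (F →ₗ[ℝ] F)) (T : E → F) : Prop :=
  ∀ π : E →ₗ[ℝ] E, IsOrderProjection π → ∀ x : E, T (π x) = Φ π (T x)

/-- The principal projection property: for every `x` there is an order projection `π_x`
(the projection onto the band generated by `x`) such that `z - π_x z ⊥ x` for all `z`,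
and `π_x z ⊥ w` whenever `w ⊥ x`. -/
def HasPPP (E : Type*) [Lattice E] [AddCommGroup E] [Module ℝ E] : Prop :=
  ∀ x : E, ∃ π : E →ₗ[ℝ] E, IsOrderProjection π ∧
    (∀ z : E, VDisjoint (z - π z) x) ∧
    (∀ z w : E, VDisjoint w x → VDisjoint (π z) w)

/-- Dedekind completeness: every nonempty set bounded above has a supremum. -/
def DedekindComplete (F : Type*) [Lattice F] : Prop :=
  ∀ S : Set F, S.Nonempty → BddAbove S → ∃ b, IsLUB S b


variable {E F : Type*}
  [Lattice E] [AddCommGroup E] [Module ℝ E]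
  [CovariantClass E E (· + ·) (· ≤ ·)] [PosSMulMono ℝ E]
  [Lattice F] [AddCommGroup F] [Module ℝ F]
  [CovariantClass F F (· + ·) (· ≤ ·)] [PosSMulMono ℝ F]

section Helpers
variable {G : Type*} [Lattice G] [AddCommGroup G]
  [CovariantClass G G (· + ·) (· ≤ ·)]

lemma inf_add_le' {a b c : G} (ha : 0 ≤ a) (hb : 0 ≤ b) (hc : 0 ≤ c) :
    a ⊓ (b + c) ≤ a ⊓ b + a ⊓ c := by
  have h : a ⊓ (b + c) - a ⊓ c ≤ a ⊓ b := by
    rw [sub_inf]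
    refine sup_le (le_inf ?_ ?_) (le_inf ?_ ?_)
    · exact le_trans (sub_nonpos.2 inf_le_left) ha
    · exact le_trans (sub_nonpos.2 inf_le_left) hb
    · calc a ⊓ (b + c) - c ≤ a - 0 := sub_le_sub inf_le_left hc
        _ = a := sub_zero a
    · calc a ⊓ (b + c) - c ≤ (b + c) - c := sub_le_sub_right inf_le_right c
        _ = b := add_sub_cancel_right b c
  exact sub_le_iff_le_add.1 h

/-- If `u` is disjoint from `b` and from `c`, and `|u| ≤ |b| + |c|`, then `u = 0`. -/
lemma eq_zero_of_two_disjoint {u b c : G} (hb : VDisjoint u b) (hc : VDisjoint u c)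
    (h : |u| ≤ |b| + |c|) : u = 0 := by
  have h2 : |u| ⊓ |u| ≤ |u| ⊓ (|b| + |c|) := inf_le_inf_left _ h
  have h3 : |u| ⊓ (|b| + |c|) ≤ |u| ⊓ |b| + |u| ⊓ |c| :=
    inf_add_le' (abs_nonneg u) (abs_nonneg b) (abs_nonneg c)
  rw [hb, hc, add_zero] at h3
  rw [inf_idem] at h2
  have hle : |u| ≤ 0 := le_trans h2 h3
  exact le_antisymm ((le_abs_self u).trans hle) (neg_nonpos.1 ((neg_le_abs u).trans hle))

lemma vdisjoint_comm {a b : G} (h : VDisjoint a b) : VDisjoint b a := by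
  rwa [VDisjoint, inf_comm]
end Helpers

section ProjHelpers
variable {G : Type*} [Lattice G] [AddCommGroup G] [Module ℝ G]
  [CovariantClass G G (· + ·) (· ≤ ·)]

lemma proj_mono {ρ : G →ₗ[ℝ] G} (hρ : IsOrderProjection ρ) {u v : G} (h : u ≤ v) :
    ρ u ≤ ρ v := by
  have h0 := (hρ.2 (v - u) (sub_nonneg.2 h)).1
  rw [map_sub] at h0
  exact sub_nonneg.1 h0

lemma proj_compl_mono {ρ : G →ₗ[ℝ] G} (hρ : IsOrderProjection ρ) {u v : G} (h : u ≤ v) :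
    u - ρ u ≤ v - ρ v := by
  have h0 := (hρ.2 (v - u) (sub_nonneg.2 h)).2
  rw [map_sub] at h0
  calc u - ρ u = v - (v - u + ρ u) := by abel
    _ ≤ v - (ρ v - ρ u + ρ u) := sub_le_sub_left (add_le_add h0 le_rfl) v
    _ = v - ρ v := by abel

lemma proj_abs_fix {ρ : G →ₗ[ℝ] G} (hρ : IsOrderProjection ρ) {a : G} (ha : ρ a = a) :
    ρ |a| = |a| := by
  refine le_antisymm (hρ.2 |a| (abs_nonneg a)).2 (abs_le'.2 ⟨?_, ?_⟩)
  · have := proj_mono hρ (le_abs_self a)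
    rwa [ha] at this
  · have := proj_mono hρ (neg_le_abs a)
    rwa [map_neg, ha] at this

lemma proj_abs_kill {ρ : G →ₗ[ℝ] G} (hρ : IsOrderProjection ρ) {b : G} (hb : ρ b = 0) :
    ρ |b| = 0 := by
  have h1 : b ≤ |b| - ρ |b| := by
    have := proj_compl_mono hρ (le_abs_self b)
    rwa [hb, sub_zero] at this
  have h2 : -b ≤ |b| - ρ |b| := by
    have := proj_compl_mono hρ (neg_le_abs b)
    rwa [map_neg, hb, neg_zero, sub_zero] at this
  have habs : |b| ≤ |b| - ρ |b| := abs_le'.2 ⟨h1, h2⟩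
  exact le_antisymm ((le_sub_self_iff _).1 habs) (hρ.2 |b| (abs_nonneg b)).1

/-- An order projection which fixes `a` and kills `b` witnesses disjointness of `a` and `b`. -/
lemma disjoint_of_proj {ρ : G →ₗ[ℝ] G} (hρ : IsOrderProjection ρ) {a b : G}
    (ha : ρ a = a) (hb : ρ b = 0) : VDisjoint a b := by
  set c := |a| ⊓ |b| with hc
  have hc0 : 0 ≤ c := le_inf (abs_nonneg a) (abs_nonneg b)
  have hρc : ρ c = 0 := by
    have h1 : ρ c ≤ ρ |b| := proj_mono hρ inf_le_right
    rw [proj_abs_kill hρ hb] at h1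
    exact le_antisymm h1 (hρ.2 c hc0).1
  have ha' : ρ |a| = |a| := proj_abs_fix hρ ha
  have h2 : c - ρ c ≤ |a| - ρ |a| := proj_compl_mono hρ inf_le_left
  rw [hρc, sub_zero, ha', sub_self] at h2
  exact le_antisymm h2 hc0
end ProjHelpers

/-- an atomic operator on a vector lattice with the principal projection
property is disjointness preserving. -/
theorem atomic_disjointness_preserving
    (hE : HasPPP E) (Φ : (E →ₗ[ℝ] E) → (F →ₗ[ℝ] F)) (hΦ : IsBooleanHom Φ)
    (T : E → F) (hT : IsAtomic Φ T) :
    ∀ x y : E, VDisjoint x y → VDisjoint (T x) (T y) := by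
  intro x y hxy
  obtain ⟨π, hπ, h1, h2⟩ := hE x
  -- Step 1: `π x = x`.
  have hux : VDisjoint (x - π x) x := h1 x
  have hupx : VDisjoint (π x) (x - π x) := h2 x (x - π x) hux
  have hπx : π x = x := by
    have hb : |x - π x| ≤ |x| + |π x| := by
      calc |x - π x| = |x + -(π x)| := by rw [sub_eq_add_neg]
        _ ≤ |x| + |-(π x)| := abs_add_le x (-(π x))
        _ = |x| + |π x| := by rw [abs_neg]
    have h0 : x - π x = 0 := eq_zero_of_two_disjoint hux (vdisjoint_comm hupx) hb
    exact (sub_eq_zero.1 h0).symm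
  -- Step 2: `π y = 0`.
  have hyw : VDisjoint (y - π y) x := h1 y
  have hpyy : VDisjoint (π y) y := h2 y y (vdisjoint_comm hxy)
  have hpyw : VDisjoint (π y) (y - π y) := h2 y (y - π y) hyw
  have hπy : π y = 0 := by
    refine eq_zero_of_two_disjoint hpyy hpyw ?_
    calc |π y| = |y + -(y - π y)| := by rw [show y + -(y - π y) = π y by abel]
      _ ≤ |y| + |-(y - π y)| := abs_add_le y (-(y - π y))
      _ = |y| + |y - π y| := by rw [abs_neg]
  -- Step 3: transfer to `F` via `Φ` and atomicity.
  have hρ : IsOrderProjection (Φ π) := hΦ.1 π hπ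
  have hTx : Φ π (T x) = T x := by rw [← hT π hπ x, hπx]
  have hcomp : IsOrderProjection (LinearMap.id - π) := by
    constructor
    · intro z
      simp [LinearMap.sub_apply, map_sub, hπ.1]
    · intro z hz
      refine ⟨?_, ?_⟩
      · simpa [LinearMap.sub_apply, sub_nonneg] using (hπ.2 z hz).2
      · simpa [LinearMap.sub_apply] using sub_le_self z (hπ.2 z hz).1
  have hTy0 : Φ π (T y) = 0 := by
    have h5 := hT (LinearMap.id - π) hcomp y
    rw [hΦ.2.2.2 π hπ] at h5
    have h6 : (LinearMap.id - π : E →ₗ[ℝ] E) y = y := by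
      simp [LinearMap.sub_apply, hπy]
    rw [h6, LinearMap.sub_apply, LinearMap.id_apply] at h5
    exact sub_eq_self.1 h5.symm
  exact disjoint_of_proj hρ hTx hTy0


end VL
end

section
/- Let E be a vector lattice with the principal projection property, F a vector lattice, Φ : 𝔅(E) → 𝔅(F) a Boolean homomorphism, and T : E → F atomic subordinate to Φ. Define R : E → F by R x = |T x|. Then: (i) R is orthogonally additive; (ii) R is atomic subordinate to Φ; (iii) R is the least upper bound of T and −T among orthogonally additive operators, i.e. T x ≤ R x and −T x ≤ R x for all x ∈ E, and whenever G : E → F is orthogonally additive with T x ≤ G x and −T x ≤ G x for all x ∈ E, then R x ≤ G x for all x ∈ E. -/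
namespace VL

variable {E F : Type*}
  [Lattice E] [AddCommGroup E] [Module ℝ E]
  [CovariantClass E E (· + ·) (· ≤ ·)] [PosSMulMono ℝ E]
  [Lattice F] [AddCommGroup F] [Module ℝ F]
  [CovariantClass F F (· + ·) (· ≤ ·)] [PosSMulMono ℝ F]


section Aux

variable {G : Type*} [Lattice G] [AddCommGroup G] [CovariantClass G G (· + ·) (· ≤ ·)]

/-- For disjoint nonnegative elements, `|c - d| = c + d`. -/
lemma abs_sub_of_inf_zero {c d : G} (hc : 0 ≤ c) (hd : 0 ≤ d) (h : c ⊓ d = 0) :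
    |c - d| = c + d := by
  have hsup : c ⊔ d = c + d := by
    have := inf_add_sup c d
    rw [h, zero_add] at this
    exact this
  have hpos : (c - d)⁺ = c := by
    have : (c - d) ⊔ 0 = (c ⊔ d) - d := by
      rw [sup_sub]; simp
    rw [posPart_def, this, hsup]; abel
  have hneg : (c - d)⁻ = d := by
    have : (-(c - d)) ⊔ 0 = (d ⊔ c) - c := by
      rw [sup_sub]; simp [neg_sub]
    rw [negPart_def, this, sup_comm d c, hsup]; abel
  rw [← posPart_add_negPart (c - d), hpos, hneg]

lemma eq_zero_of_abs_eq_zero' {a : G} (h : |a| = 0) : a = 0 :=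
  le_antisymm (h ▸ le_abs_self a) (neg_nonpos.1 (h ▸ neg_le_abs a))

/-- For disjoint elements, `|a + b| = |a| + |b|`. -/
lemma abs_add_of_vdisjoint {a b : G} (h : |a| ⊓ |b| = 0) : |a + b| = |a| + |b| := by
  refine le_antisymm (abs_add_le a b) ?_
  have h1 : |(|a| - |b|)| ≤ |a + b| := by
    have := abs_abs_sub_abs_le a (-b)
    simpa [sub_neg_eq_add] using this
  rwa [abs_sub_of_inf_zero (abs_nonneg a) (abs_nonneg b) h] at h1

end Aux

section Proj

variable {G : Type*} [Lattice G] [AddCommGroup G] [Module ℝ G]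
  [CovariantClass G G (· + ·) (· ≤ ·)]

lemma IsOrderProjection.mono {π : G →ₗ[ℝ] G} (hπ : IsOrderProjection π)
    {a b : G} (hab : a ≤ b) : π a ≤ π b := by
  have := (hπ.2 (b - a) (sub_nonneg.2 hab)).1
  rw [map_sub] at this
  exact sub_nonneg.1 (by simpa using this)

lemma IsOrderProjection.compl {π : G →ₗ[ℝ] G} (hπ : IsOrderProjection π) :
    IsOrderProjection (LinearMap.id - π) := by
  refine ⟨fun x => ?_, fun x hx => ?_⟩
  · simp [map_sub, hπ.1 x]
  · obtain ⟨h1, h2⟩ := hπ.2 x hx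
    constructor
    · simpa using h2
    · simpa using h1

lemma IsOrderProjection.abs_map {π : G →ₗ[ℝ] G} (hπ : IsOrderProjection π)
    (u : G) : |π u| = π |u| := by
  have hd : π u⁺ ⊓ π u⁻ = 0 := by
    refine le_antisymm ?_ (le_inf (hπ.2 _ (posPart_nonneg u)).1 (hπ.2 _ (negPart_nonneg u)).1)
    calc π u⁺ ⊓ π u⁻ ≤ u⁺ ⊓ u⁻ :=
          inf_le_inf (hπ.2 _ (posPart_nonneg u)).2 (hπ.2 _ (negPart_nonneg u)).2
      _ = 0 := posPart_inf_negPart_eq_zero u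
  have h1 : π u = π u⁺ - π u⁻ := by
    rw [← map_sub, posPart_sub_negPart]
  rw [h1, abs_sub_of_inf_zero (hπ.2 _ (posPart_nonneg u)).1 (hπ.2 _ (negPart_nonneg u)).1 hd,
    ← map_add, posPart_add_negPart]

lemma IsOrderProjection.abs_le {π : G →ₗ[ℝ] G} (hπ : IsOrderProjection π)
    (u : G) : |π u| ≤ |u| := by
  rw [hπ.abs_map u]
  exact (hπ.2 |u| (abs_nonneg u)).2

lemma IsOrderProjection.vdisjoint {π : G →ₗ[ℝ] G} (hπ : IsOrderProjection π)
    (u : G) : VDisjoint (π u) (u - π u) := by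
  have hcompl := hπ.compl
  have h2 : |u - π u| = |u| - π |u| := by
    have := hcompl.abs_map u
    simpa using this
  rw [VDisjoint, hπ.abs_map u, h2]
  set e := π |u| ⊓ (|u| - π |u|) with he
  have he0 : 0 ≤ e := le_inf (hπ.2 _ (abs_nonneg u)).1
    (by simpa using (hπ.2 _ (abs_nonneg u)).2)
  have hπe : π e = 0 := by
    refine le_antisymm ?_ (hπ.2 _ he0).1
    have : π e ≤ π (|u| - π |u|) := hπ.mono inf_le_right
    rw [map_sub, hπ.1] at this
    simpa using this
  have hce : e - π e ≤ 0 := by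
    have h3 : e - π e ≤ π |u| - π (π |u|) := by
      have := hcompl.mono (inf_le_left : e ≤ π |u|)
      simpa using this
    rw [hπ.1] at h3
    simpa using h3
  have : e ≤ 0 := by
    have := add_le_add (hπe.le) hce
    simpa using this
  exact le_antisymm this he0

end Proj

/-- for an atomic operator `T`, the map `R x = |T x|` is orthogonally
additive, atomic subordinate to the same Boolean homomorphism, and is the least upper
bound of `T` and `-T` among orthogonally additive operators. -/
theorem atomic_abs
    (hE : HasPPP E) (Φ : (E →ₗ[ℝ] E) → (F →ₗ[ℝ] F)) (hΦ : IsBooleanHom Φ)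
    (T : E → F) (hT : IsAtomic Φ T) (R : E → F) (hR : ∀ x, R x = |T x|) :
    (∀ x y : E, VDisjoint x y → R (x + y) = R x + R y) ∧
    IsAtomic Φ R ∧
    ((∀ x : E, T x ≤ R x ∧ -T x ≤ R x) ∧
      ∀ G : E → F, (∀ x y : E, VDisjoint x y → G (x + y) = G x + G y) →
        (∀ x : E, T x ≤ G x ∧ -T x ≤ G x) → ∀ x : E, R x ≤ G x) := by
  constructor
  · -- orthogonal additivity of R
    intro x y hxy
    obtain ⟨π, hπ, h1, h2⟩ := hE x
    have hyx : VDisjoint y x := by rwa [VDisjoint, inf_comm] at hxy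
    -- π x = x
    have hpx : π x = x := by
      have d1 : VDisjoint (x - π x) x := h1 x
      have d2 : VDisjoint (π x) (x - π x) := hπ.vdisjoint x
      have hsum : |x| = |π x| + |x - π x| := by
        have := abs_add_of_vdisjoint d2
        simpa using this
      have hle : |x - π x| ≤ |x| := by
        rw [hsum]
        simpa using abs_nonneg (π x)
      have : |x - π x| = 0 := by
        have := inf_eq_left.2 hle
        rw [← this]; exact d1
      have := eq_zero_of_abs_eq_zero' this
      exact (sub_eq_zero.1 this).symm
    have hpy : π y = 0 := by
      have d3 : VDisjoint (π y) y := h2 y y hyx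
      have hle : |π y| ≤ |y| := hπ.abs_le y
      have : |π y| = 0 := by
        have := inf_eq_left.2 hle
        rw [← this]; exact d3
      exact eq_zero_of_abs_eq_zero' this
    have hπxy : π (x + y) = x := by rw [map_add, hpx, hpy, add_zero]
    have hΦπ : IsOrderProjection (Φ π) := hΦ.1 π hπ
    have hA : T x = Φ π (T (x + y)) := by
      rw [← hT π hπ (x + y), hπxy]
    have hcompl : IsOrderProjection (LinearMap.id - π) := hπ.compl
    have hB : T y = T (x + y) - Φ π (T (x + y)) := by
      have := hT (LinearMap.id - π) hcompl (x + y)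
      rw [hΦ.2.2.2 π hπ] at this
      simpa [hπxy] using this
    have hd : VDisjoint (T x) (T y) := by
      rw [hA, hB]
      exact hΦπ.vdisjoint (T (x + y))
    have hsum : T (x + y) = T x + T y := by
      rw [hA, hB]; abel
    rw [hR, hR, hR, hsum, abs_add_of_vdisjoint hd]
  constructor
  · -- R is atomic
    intro π hπ x
    rw [hR, hR, hT π hπ x, (hΦ.1 π hπ).abs_map (T x)]
  constructor
  · intro x
    rw [hR]
    exact ⟨le_abs_self _, neg_le_abs _⟩
  · intro G _ hG x
    rw [hR]
    exact abs_le'.2 ⟨(hG x).1, (hG x).2⟩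


end VL
end

section
/- Let E be a vector lattice with the principal projection property, F a Dedekind complete vector lattice, Φ : 𝔅(E) → 𝔅(F) a Boolean homomorphism, T : E → F atomic subordinate to Φ, and let S : E → F be an orthogonally additive operator with 0 ≤ S x ≤ T x for all x ∈ E. Then S is atomic subordinate to Φ. (In other words, the atomic operators subordinate to Φ form an order ideal in the regular orthogonally additive operators.) -/
namespace VL

variable {E F : Type*}
  [Lattice E] [AddCommGroup E] [Module ℝ E]
  [CovariantClass E E (· + ·) (· ≤ ·)] [PosSMulMono ℝ E]
  [Lattice F] [AddCommGroup F] [Module ℝ F]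
  [CovariantClass F F (· + ·) (· ≤ ·)] [PosSMulMono ℝ F]

section Aux

variable {G : Type*} [Lattice G] [AddCommGroup G] [Module ℝ G]
  [CovariantClass G G (· + ·) (· ≤ ·)]

lemma op_mono {π : G →ₗ[ℝ] G} (hπ : IsOrderProjection π)
    {a b : G} (h : a ≤ b) : π a ≤ π b :=
  sub_nonneg.mp (by rw [← map_sub]; exact (hπ.2 _ (sub_nonneg.mpr h)).1)

lemma op_comono {π : G →ₗ[ℝ] G} (hπ : IsOrderProjection π)
    {a b : G} (h : a ≤ b) : a - π a ≤ b - π b := by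
  have h1 : π (b - a) ≤ b - a := (hπ.2 _ (sub_nonneg.mpr h)).2
  rw [map_sub] at h1
  have := sub_le_sub h1 (le_refl (π b - π a))
  -- alternative: direct
  have h2 : (b - a) - (π b - π a) ≥ 0 := sub_nonneg.mpr h1
  have : a - π a ≤ b - π b := by
    rw [← sub_nonneg]
    calc (0:G) ≤ (b - a) - (π b - π a) := h2
      _ = (b - π b) - (a - π a) := by abel
  exact this

lemma proj_disjoint {π : G →ₗ[ℝ] G} (hπ : IsOrderProjection π) (x : G) :
    VDisjoint (π x) (x - π x) := by
  obtain ⟨hid, hp⟩ := hπ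
  have hπ' : IsOrderProjection π := ⟨hid, hp⟩
  have habs : (0:G) ≤ |x| := abs_nonneg x
  set a := π |x| with ha
  set b := |x| - π |x| with hb
  have hπb : π b = 0 := by rw [hb, map_sub, hid]; simp
  have hρa : a - π a = 0 := by rw [ha, hid]; simp
  have hinf0 : a ⊓ b = 0 := by
    have hy0 : (0:G) ≤ a ⊓ b := le_inf (hp _ habs).1 (sub_nonneg.mpr (hp _ habs).2)
    have h1 : π (a ⊓ b) ≤ 0 := by
      have := op_mono hπ' (inf_le_right : a ⊓ b ≤ b); rwa [hπb] at this
    have h2 : (a ⊓ b) - π (a ⊓ b) ≤ 0 := by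
      have := op_comono hπ' (inf_le_left : a ⊓ b ≤ a); rwa [hρa] at this
    have hle : a ⊓ b ≤ 0 := by
      have := add_nonpos h1 h2
      calc a ⊓ b = π (a ⊓ b) + ((a ⊓ b) - π (a ⊓ b)) := by abel
        _ ≤ 0 := this
    exact le_antisymm hle hy0
  have h1 : |π x| ≤ a := by
    rw [abs_le']
    refine ⟨op_mono hπ' (le_abs_self x), ?_⟩
    rw [← map_neg]
    exact op_mono hπ' (neg_le_abs x)
  have h2 : |x - π x| ≤ b := by
    rw [abs_le']
    constructor
    · exact op_comono hπ' (le_abs_self x)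
    · have := op_comono hπ' (neg_le_abs x)
      rw [map_neg] at this
      calc -(x - π x) = (-x) - π (-x) := by rw [map_neg]; abel
        _ ≤ b := op_comono hπ' (neg_le_abs x)
  have hle : |π x| ⊓ |x - π x| ≤ 0 := by
    calc |π x| ⊓ |x - π x| ≤ a ⊓ b := inf_le_inf h1 h2
      _ = 0 := hinf0
  exact le_antisymm hle (le_inf (abs_nonneg _) (abs_nonneg _))

end Aux

/-- an orthogonally additive operator dominated by an atomic operator
(between `0` and `T`) is itself atomic subordinate to the same Boolean homomorphism. -/
theorem atomic_ideal
    (hE : HasPPP E) (hF : DedekindComplete F)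
    (Φ : (E →ₗ[ℝ] E) → (F →ₗ[ℝ] F)) (hΦ : IsBooleanHom Φ)
    (T : E → F) (hT : IsAtomic Φ T)
    (S : E → F) (hSoa : ∀ x y : E, VDisjoint x y → S (x + y) = S x + S y)
    (hST : ∀ x : E, 0 ≤ S x ∧ S x ≤ T x) :
    IsAtomic Φ S := by
  intro π hπ x
  have hρ : IsOrderProjection (LinearMap.id - π) := by
    obtain ⟨hid, hp⟩ := hπ
    constructor
    · intro z; simp [LinearMap.sub_apply, map_sub, hid]
    · intro z hz
      simp only [LinearMap.sub_apply, LinearMap.id_apply]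
      exact ⟨sub_nonneg.mpr (hp z hz).2, sub_le_self _ (hp z hz).1⟩
  have hΦπ : IsOrderProjection (Φ π) := hΦ.1 π hπ
  have hsplit : S x = S (π x) + S (x - π x) := by
    have h := hSoa (π x) (x - π x) (proj_disjoint hπ x)
    rwa [add_sub_cancel] at h
  have hTfix : Φ π (T (π x)) = T (π x) := by
    have h1 := hT π hπ (π x)
    rw [hπ.1] at h1
    exact h1.symm
  have hfix : Φ π (S (π x)) = S (π x) := by
    have hu0 : (0:F) ≤ S (π x) := (hST (π x)).1
    have h1 : 0 ≤ S (π x) - Φ π (S (π x)) := sub_nonneg.mpr (hΦπ.2 _ hu0).2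
    have h2 : S (π x) - Φ π (S (π x)) ≤ T (π x) - Φ π (T (π x)) :=
      op_comono hΦπ (hST (π x)).2
    rw [hTfix, sub_self] at h2
    exact (sub_eq_zero.mp (le_antisymm h2 h1)).symm
  have hy : π (x - π x) = 0 := by rw [map_sub, hπ.1]; simp
  have hTy : T (x - π x) = Φ (LinearMap.id - π) (T (x - π x)) := by
    have h := hT (LinearMap.id - π) hρ (x - π x)
    simp only [LinearMap.sub_apply, LinearMap.id_apply, hy, sub_zero] at h
    exact h
  have hΦzero : Φ π (T (x - π x)) = 0 := by
    rw [hTy, hΦ.2.2.2 π hπ]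
    simp only [LinearMap.sub_apply, LinearMap.id_apply, map_sub]
    rw [hΦπ.1, sub_self]
  have hSzero : Φ π (S (x - π x)) = 0 := by
    have h1 : 0 ≤ Φ π (S (x - π x)) := (hΦπ.2 _ (hST _).1).1
    have h2 : Φ π (S (x - π x)) ≤ Φ π (T (x - π x)) := op_mono hΦπ (hST _).2
    rw [hΦzero] at h2
    exact le_antisymm h2 h1
  rw [hsplit, map_add, hfix, hSzero, add_zero]

end VL
end

section
/- Let E and F be vector lattices, Φ : 𝔅(E) → 𝔅(F) a Boolean homomorphism, (T_λ)_{λ∈Λ} a net of maps E → F each of which is atomic subordinate to Φ, and T : E → F a map such that for every x ∈ E the net (T_λ x) order converges to T x, i.e. there is a net (u_λ)_{λ∈Λ} in F with u_λ ↓ 0 and |T_λ x − T x| ≤ u_λ for all λ beyond some index λ₀. Then T is atomic subordinate to Φ. (Together with the ideal property, this shows that the atomic operators subordinate to Φ form a band in the regular orthogonally additive operators.) -/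
namespace VL

variable {E F : Type*}
  [Lattice E] [AddCommGroup E] [Module ℝ E]
  [CovariantClass E E (· + ·) (· ≤ ·)] [PosSMulMono ℝ E]
  [Lattice F] [AddCommGroup F] [Module ℝ F]
  [CovariantClass F F (· + ·) (· ≤ ·)] [PosSMulMono ℝ F]

/-- an order limit of a net of atomic operators (all subordinate to the same
Boolean homomorphism `Φ`) is atomic subordinate to `Φ`. -/
theorem atomic_band
    {Λ : Type*} [Nonempty Λ] [Preorder Λ] [IsDirected Λ (· ≤ ·)]
    (Φ : (E →ₗ[ℝ] E) → (F →ₗ[ℝ] F)) (hΦ : IsBooleanHom Φ)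
    (Tl : Λ → E → F) (hTl : ∀ l, IsAtomic Φ (Tl l)) (T : E → F)
    (hconv : ∀ x : E, ∃ u : Λ → F, Antitone u ∧ IsGLB (Set.range u) 0 ∧
      ∃ l₀ : Λ, ∀ l : Λ, l₀ ≤ l → |Tl l x - T x| ≤ u l) :
    IsAtomic Φ T := by
  intro π hπ x
  obtain ⟨hΦπ1, hΦπ2⟩ := hΦ.1 π hπ
  -- |Φπ z| ≤ |z|
  have key : ∀ z : F, |Φ π z| ≤ |z| := by
    intro z
    have h1 := hΦπ2 z⁺ (posPart_nonneg z)
    have h2 := hΦπ2 z⁻ (negPart_nonneg z)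
    have hz : Φ π z = Φ π z⁺ - Φ π z⁻ := by
      rw [← map_sub, posPart_sub_negPart]
    rw [hz]
    calc |Φ π z⁺ - Φ π z⁻| ≤ |Φ π z⁺| + |Φ π z⁻| := by
          simpa [sub_eq_add_neg, abs_neg] using abs_add_le (Φ π z⁺) (-(Φ π z⁻))
      _ = Φ π z⁺ + Φ π z⁻ := by rw [abs_of_nonneg h1.1, abs_of_nonneg h2.1]
      _ ≤ z⁺ + z⁻ := add_le_add h1.2 h2.2
      _ = |z| := posPart_add_negPart z
  obtain ⟨u, hu_anti, hu_glb, l₁, hu⟩ := hconv (π x)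
  obtain ⟨v, hv_anti, hv_glb, l₂, hv⟩ := hconv x
  set a := |T (π x) - Φ π (T x)| with ha
  obtain ⟨l₃, hl₃1, hl₃2⟩ := directed_of (· ≤ ·) l₁ l₂
  have hbound : ∀ l, l₃ ≤ l → a ≤ u l + v l := by
    intro l hl
    have e1 : |T (π x) - Tl l (π x)| ≤ u l := by
      rw [abs_sub_comm]; exact hu l (le_trans hl₃1 hl)
    have e2 : |Tl l (π x) - Φ π (T x)| ≤ v l := by
      rw [hTl l π hπ x, ← map_sub]
      exact le_trans (key _) (hv l (le_trans hl₃2 hl))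
    calc a ≤ |T (π x) - Tl l (π x)| + |Tl l (π x) - Φ π (T x)| := by
          have h := abs_add_le (T (π x) - Tl l (π x)) (Tl l (π x) - Φ π (T x))
          simpa [ha] using h
      _ ≤ u l + v l := add_le_add e1 e2
  -- a ≤ v m for all m ≥ l₃
  have hav : ∀ m, l₃ ≤ m → a ≤ v m := by
    intro m hm
    have hlb : a - v m ∈ lowerBounds (Set.range u) := by
      rintro _ ⟨l, rfl⟩
      obtain ⟨l', hl'1, hl'2⟩ := directed_of (· ≤ ·) l m
      have h1 : a ≤ u l' + v l' := hbound l' (le_trans hm hl'2)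
      have h2 : v l' ≤ v m := hv_anti hl'2
      have h3 : u l' ≤ u l := hu_anti hl'1
      have : a ≤ u l + v m := le_trans h1 (add_le_add h3 h2)
      exact sub_le_iff_le_add.2 this
    have h0 := hu_glb.2 hlb
    have := sub_nonpos.1 h0
    simpa using this
  -- a is a lower bound of range v
  have hlbv : a ∈ lowerBounds (Set.range v) := by
    rintro _ ⟨m, rfl⟩
    obtain ⟨m', hm'1, hm'2⟩ := directed_of (· ≤ ·) m l₃
    exact le_trans (hav m' hm'2) (hv_anti hm'1)
  have ha0 : a ≤ 0 := hv_glb.2 hlbv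
  have h0 : |T (π x) - Φ π (T x)| = 0 := le_antisymm ha0 (abs_nonneg _)
  have h1 : T (π x) - Φ π (T x) ≤ 0 := h0 ▸ le_abs_self _
  have h2 : 0 ≤ T (π x) - Φ π (T x) := by
    have := neg_le_abs (T (π x) - Φ π (T x))
    rw [h0] at this
    exact neg_nonpos.1 this
  exact sub_eq_zero.1 (le_antisymm h1 h2)

end VL
end

section
/- Let E be a vector lattice, D ⊆ E a lateral ideal, F a vector lattice, and T : D → F a positive map that is orthogonally additive on D (T(x + y) = T x + T y whenever x, y ∈ D and x ⊥ y). Then for every x ∈ E the set {T y : y ∈ 𝓕_x ∩ D} is upward directed: for all y, z ∈ 𝓕_x ∩ D there exists v ∈ 𝓕_x ∩ D with T y ≤ T v and T z ≤ T v. -/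
namespace VL

section Helpers
variable {G : Type*} [Lattice G] [AddCommGroup G] [CovariantClass G G (· + ·) (· ≤ ·)]

lemma my_inf_sup_left (a b c : G) : a ⊓ (b ⊔ c) = (a ⊓ b) ⊔ (a ⊓ c) :=
  letI := AddCommGroup.toDistribLattice G
  inf_sup_left a b c

lemma my_posPart_le_abs (a : G) : a⁺ ≤ |a| := sup_le (le_abs_self a) (abs_nonneg a)
lemma my_negPart_le_abs (a : G) : a⁻ ≤ |a| := sup_le (neg_le_abs a) (abs_nonneg a)

lemma inf_zero_mono {a b a' b' : G} (h : a ⊓ b = 0) (ha' : 0 ≤ a') (hb' : 0 ≤ b')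
    (haa : a' ≤ a) (hbb : b' ≤ b) : a' ⊓ b' = 0 :=
  le_antisymm ((inf_le_inf haa hbb).trans h.le) (le_inf ha' hb')

lemma inf_add_le3 {u v w : G} (hu : 0 ≤ u) (hv : 0 ≤ v) (hw : 0 ≤ w) :
    u ⊓ (v + w) ≤ u ⊓ v + u ⊓ w := by
  set t := u ⊓ (v + w) with ht
  have h1 : t - u ⊓ v = (t - u) ⊔ (t - v) := sub_inf u v t
  have h2 : t - u ≤ u ⊓ w := le_trans (sub_nonpos.2 inf_le_left) (le_inf hu hw)
  have h3 : t - v ≤ u ⊓ w := by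
    refine le_inf ?_ ?_
    · exact sub_le_iff_le_add.2 (le_trans inf_le_left (le_add_of_nonneg_right hv))
    · exact sub_le_iff_le_add.2 (by rw [add_comm]; exact inf_le_right)
  have : t - u ⊓ v ≤ u ⊓ w := by rw [h1]; exact sup_le h2 h3
  exact sub_le_iff_le_add'.1 this

lemma inf4 {a b c d : G} (ha : 0 ≤ a) (hb : 0 ≤ b) (hc : 0 ≤ c) (hd : 0 ≤ d)
    (h1 : a ⊓ c = 0) (h2 : a ⊓ d = 0) (h3 : b ⊓ c = 0) (h4 : b ⊓ d = 0) :
    (a + b) ⊓ (c + d) = 0 := by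
  refine le_antisymm ?_ (le_inf (add_nonneg ha hb) (add_nonneg hc hd))
  have hab : 0 ≤ a + b := add_nonneg ha hb
  have e1 : (a + b) ⊓ c ≤ 0 := by
    rw [inf_comm]
    refine (inf_add_le3 hc ha hb).trans ?_
    rw [inf_comm c a, h1, inf_comm c b, h3, add_zero]
  have e2 : (a + b) ⊓ d ≤ 0 := by
    rw [inf_comm]
    refine (inf_add_le3 hd ha hb).trans ?_
    rw [inf_comm d a, h2, inf_comm d b, h4, add_zero]
  calc (a + b) ⊓ (c + d) ≤ (a + b) ⊓ c + (a + b) ⊓ d := inf_add_le3 hab hc hd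
    _ ≤ 0 + 0 := add_le_add e1 e2
    _ = 0 := add_zero 0

/-- Uniqueness of disjoint decomposition. -/
lemma parts_of_disjoint {p n : G} (hp : 0 ≤ p) (hn : 0 ≤ n) (h : p ⊓ n = 0) :
    (p - n)⁺ = p ∧ (p - n)⁻ = n ∧ |p - n| = p + n := by
  have hsup : p ⊔ n = p + n := by
    have := inf_add_sup p n
    rwa [h, zero_add] at this
  have hpos : (p - n)⁺ = p := by
    have : (p - n)⁺ = (p - n) ⊔ (n - n) := by rw [sub_self]; rfl
    rw [this, ← sup_sub, hsup]
    abel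
  have hneg : (p - n)⁻ = n := by
    have h2 := posPart_sub_negPart (p - n)
    rw [hpos] at h2
    exact sub_right_injective h2
  refine ⟨hpos, hneg, ?_⟩
  rw [← posPart_add_negPart (p - n), hpos, hneg]

lemma frag_decomp {y x : G} (h : Fragment y x) :
    x⁺ = y⁺ + (x - y)⁺ ∧ x⁻ = y⁻ + (x - y)⁻ := by
  have h' : |y| ⊓ |x - y| = 0 := h
  have hAC : y⁺ ⊓ (x - y)⁺ = 0 :=
    inf_zero_mono h' (posPart_nonneg y) (posPart_nonneg _) (my_posPart_le_abs y)
      (my_posPart_le_abs _)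
  have hAD : y⁺ ⊓ (x - y)⁻ = 0 :=
    inf_zero_mono h' (posPart_nonneg y) (negPart_nonneg _) (my_posPart_le_abs y)
      (my_negPart_le_abs _)
  have hBC : y⁻ ⊓ (x - y)⁺ = 0 :=
    inf_zero_mono h' (negPart_nonneg y) (posPart_nonneg _) (my_negPart_le_abs y)
      (my_posPart_le_abs _)
  have hBD : y⁻ ⊓ (x - y)⁻ = 0 :=
    inf_zero_mono h' (negPart_nonneg y) (negPart_nonneg _) (my_negPart_le_abs y)
      (my_negPart_le_abs _)
  have hx : (y⁺ + (x - y)⁺) - (y⁻ + (x - y)⁻) = x := by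
    have e1 := posPart_sub_negPart y
    have e2 := posPart_sub_negPart (x - y)
    calc (y⁺ + (x - y)⁺) - (y⁻ + (x - y)⁻)
        = (y⁺ - y⁻) + ((x - y)⁺ - (x - y)⁻) := by abel
      _ = y + (x - y) := by rw [e1, e2]
      _ = x := by abel
  have hBC' : (x - y)⁺ ⊓ y⁻ = 0 := by rw [inf_comm]; exact hBC
  have hdisj : (y⁺ + (x - y)⁺) ⊓ (y⁻ + (x - y)⁻) = 0 :=
    inf4 (posPart_nonneg y) (posPart_nonneg (x - y)) (negPart_nonneg y)
      (negPart_nonneg (x - y)) (posPart_inf_negPart_eq_zero y) hAD hBC'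
      (posPart_inf_negPart_eq_zero (x - y))
  obtain ⟨hpos, hneg, -⟩ := parts_of_disjoint
    (add_nonneg (posPart_nonneg y) (posPart_nonneg _))
    (add_nonneg (negPart_nonneg y) (negPart_nonneg _)) hdisj
  constructor
  · conv_lhs => rw [← hx]
    exact hpos
  · conv_lhs => rw [← hx]
    exact hneg

/-- Positive part of a fragment is a fragment of the positive part. -/
lemma frag_pos {y x : G} (h : Fragment y x) :
    y⁺ ≤ x⁺ ∧ y⁺ ⊓ (x⁺ - y⁺) = 0 := by
  obtain ⟨h1, -⟩ := frag_decomp h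
  have hle : y⁺ ≤ x⁺ := h1 ▸ le_add_of_nonneg_right (posPart_nonneg _)
  have hsub : x⁺ - y⁺ = (x - y)⁺ := by rw [h1]; abel
  have h' : |y| ⊓ |x - y| = 0 := h
  refine ⟨hle, ?_⟩
  rw [hsub]
  exact inf_zero_mono h' (posPart_nonneg y) (posPart_nonneg _) (my_posPart_le_abs y)
    (my_posPart_le_abs _)

lemma frag_neg' {y x : G} (h : Fragment y x) : Fragment (-y) (-x) := by
  have h' : |y| ⊓ |x - y| = 0 := h
  show |(-y)| ⊓ |(-x) - (-y)| = 0
  have : (-x) - (-y) = -(x - y) := by abel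
  rw [this, abs_neg, abs_neg]
  exact h'

lemma frag_negpart {y x : G} (h : Fragment y x) :
    y⁻ ≤ x⁻ ∧ y⁻ ⊓ (x⁻ - y⁻) = 0 := by
  have := frag_pos (frag_neg' h)
  rwa [posPart_neg, posPart_neg] at this

/- Boolean lemmas in the positive cone. -/
lemma posP1 {p c d : G} (hc0 : 0 ≤ c) (hd0 : 0 ≤ d) (hcp : c ≤ p) (hdp : d ≤ p)
    (hd : d ⊓ (p - d) = 0) : (c ⊓ d) ⊓ (c - c ⊓ d) = 0 := by
  have h1 : c - c ⊓ d ≤ p - d := by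
    rw [sub_inf c d c]
    exact sup_le ((sub_self c).le.trans (sub_nonneg.2 hdp)) (sub_le_sub_right hcp d)
  have h2 : 0 ≤ c - c ⊓ d := sub_nonneg.2 inf_le_left
  exact inf_zero_mono hd (le_inf hc0 hd0) h2 inf_le_right h1

lemma posP2 {p c d : G} (hc0 : 0 ≤ c) (hcp : c ≤ p) (hdp : d ≤ p)
    (hc : c ⊓ (p - c) = 0) : (d - c ⊓ d) ⊓ c = 0 := by
  have h1 : d - c ⊓ d ≤ p - c := by
    rw [sub_inf c d d]
    exact sup_le (sub_le_sub_right hdp c) ((sub_self d).le.trans (sub_nonneg.2 hcp))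
  have h2 : 0 ≤ d - c ⊓ d := sub_nonneg.2 inf_le_right
  have := inf_zero_mono hc hc0 h2 le_rfl h1
  rw [inf_comm] at this
  exact this

lemma posP3 {p c d : G} (hc0 : 0 ≤ c) (hd0 : 0 ≤ d) (hcp : c ≤ p) (hdp : d ≤ p)
    (hc : c ⊓ (p - c) = 0) (hd : d ⊓ (p - d) = 0) :
    (c ⊔ d) ⊓ (p - c ⊔ d) = 0 := by
  have hsub : p - c ⊔ d = (p - c) ⊓ (p - d) := sub_sup c d p
  rw [hsub, inf_comm, my_inf_sup_left]
  have h0 : 0 ≤ (p - c) ⊓ (p - d) := le_inf (sub_nonneg.2 hcp) (sub_nonneg.2 hdp)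
  have hc' : (p - c) ⊓ c = 0 := by rw [inf_comm]; exact hc
  have hd' : (p - d) ⊓ d = 0 := by rw [inf_comm]; exact hd
  have e1 : (p - c) ⊓ (p - d) ⊓ c = 0 := inf_zero_mono hc' h0 hc0 inf_le_left le_rfl
  have e2 : (p - c) ⊓ (p - d) ⊓ d = 0 := inf_zero_mono hd' h0 hd0 inf_le_right le_rfl
  rw [e1, e2, sup_idem]

end Helpers

variable {E F : Type*}
  [Lattice E] [AddCommGroup E] [Module ℝ E]
  [CovariantClass E E (· + ·) (· ≤ ·)] [PosSMulMono ℝ E]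
  [Lattice F] [AddCommGroup F] [Module ℝ F]
  [CovariantClass F F (· + ·) (· ≤ ·)] [PosSMulMono ℝ F]

/-- A lateral ideal: closed under fragments and under sums of disjoint elements. -/
def IsLateralIdeal {G : Type*} [Lattice G] [AddCommGroup G] (D : Set G) : Prop :=
  (∀ x ∈ D, ∀ y : G, Fragment y x → y ∈ D) ∧
  ∀ x ∈ D, ∀ y ∈ D, VDisjoint x y → x + y ∈ D

/-- for a positive, orthogonally additive map on a lateral ideal `D`, the
set `{T y : y ∈ 𝓕ₓ ∩ D}` is upward directed. -/
theorem lateral_ideal_upward_directed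
    (D : Set E) (hD : IsLateralIdeal D) (T : E → F)
    (hTpos : ∀ x ∈ D, 0 ≤ T x)
    (hToa : ∀ x ∈ D, ∀ y ∈ D, VDisjoint x y → T (x + y) = T x + T y) :
    ∀ x y z : E, Fragment y x → y ∈ D → Fragment z x → z ∈ D →
      ∃ v : E, Fragment v x ∧ v ∈ D ∧ T y ≤ T v ∧ T z ≤ T v := by
  intro x y z hy hyD hz hzD
  obtain ⟨hAP, hA⟩ := frag_pos hy
  obtain ⟨hBN, hB⟩ := frag_negpart hy
  obtain ⟨hCP, hC⟩ := frag_pos hz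
  obtain ⟨hDN, hD2⟩ := frag_negpart hz
  have hPN := posPart_inf_negPart_eq_zero x
  have cross : ∀ s t : E, 0 ≤ s → 0 ≤ t → s ≤ x⁺ → t ≤ x⁻ → s ⊓ t = 0 :=
    fun s t hs ht h1 h2 => inf_zero_mono hPN hs ht h1 h2
  have cross' : ∀ s t : E, 0 ≤ s → 0 ≤ t → s ≤ x⁻ → t ≤ x⁺ → s ⊓ t = 0 :=
    fun s t hs ht h1 h2 => by rw [inf_comm]; exact cross t s ht hs h2 h1
  have hA0 : (0:E) ≤ y⁺ := posPart_nonneg y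
  have hB0 : (0:E) ≤ y⁻ := negPart_nonneg y
  have hC0 : (0:E) ≤ z⁺ := posPart_nonneg z
  have hD0 : (0:E) ≤ z⁻ := negPart_nonneg z
  set a := y⁺ ⊓ z⁺ with ha_def
  set b := y⁻ ⊓ z⁻ with hb_def
  have ha0 : (0:E) ≤ a := le_inf hA0 hC0
  have hb0 : (0:E) ≤ b := le_inf hB0 hD0
  have haA : a ≤ y⁺ := inf_le_left
  have haC : a ≤ z⁺ := inf_le_right
  have hbB : b ≤ y⁻ := inf_le_left
  have hbD : b ≤ z⁻ := inf_le_right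
  have haP : a ≤ x⁺ := haA.trans hAP
  have hbN : b ≤ x⁻ := hbB.trans hBN
  have hab : a ⊓ b = 0 := cross a b ha0 hb0 haP hbN
  obtain ⟨hu_pos, hu_neg, hu_abs⟩ := parts_of_disjoint ha0 hb0 hab
  -- y - u
  have hyu_eq : y - (a - b) = (y⁺ - a) - (y⁻ - b) := by
    conv_lhs => rw [← posPart_sub_negPart y]
    abel
  have hAa0 : (0:E) ≤ y⁺ - a := sub_nonneg.2 haA
  have hBb0 : (0:E) ≤ y⁻ - b := sub_nonneg.2 hbB
  have hAaP : y⁺ - a ≤ x⁺ := (sub_le_self _ ha0).trans hAP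
  have hBbN : y⁻ - b ≤ x⁻ := (sub_le_self _ hb0).trans hBN
  obtain ⟨-, -, hyu_abs⟩ := parts_of_disjoint hAa0 hBb0 (cross _ _ hAa0 hBb0 hAaP hBbN)
  -- z - u
  have hzu_eq : z - (a - b) = (z⁺ - a) - (z⁻ - b) := by
    conv_lhs => rw [← posPart_sub_negPart z]
    abel
  have hCa0 : (0:E) ≤ z⁺ - a := sub_nonneg.2 haC
  have hDb0 : (0:E) ≤ z⁻ - b := sub_nonneg.2 hbD
  have hCaP : z⁺ - a ≤ x⁺ := (sub_le_self _ ha0).trans hCP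
  have hDbN : z⁻ - b ≤ x⁻ := (sub_le_self _ hb0).trans hDN
  obtain ⟨-, -, hzu_abs⟩ := parts_of_disjoint hCa0 hDb0 (cross _ _ hCa0 hDb0 hCaP hDbN)
  have hacomm : z⁺ ⊓ y⁺ = a := inf_comm z⁺ y⁺
  have hbcomm : z⁻ ⊓ y⁻ = b := inf_comm z⁻ y⁻
  -- C1 : u ⊥ (y - u)
  have C1 : |a - b| ⊓ |y - (a - b)| = 0 := by
    rw [hu_abs, hyu_eq, hyu_abs]
    refine inf4 ha0 hb0 hAa0 hBb0 ?_ ?_ ?_ ?_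
    · exact posP1 hA0 hC0 hAP hCP hC
    · exact cross _ _ ha0 hBb0 haP hBbN
    · exact cross' _ _ hb0 hAa0 hbN hAaP
    · exact posP1 hB0 hD0 hBN hDN hD2
  -- C2 : u ⊥ (z - u)
  have C2 : |a - b| ⊓ |z - (a - b)| = 0 := by
    rw [hu_abs, hzu_eq, hzu_abs]
    refine inf4 ha0 hb0 hCa0 hDb0 ?_ ?_ ?_ ?_
    · have := posP1 hC0 hA0 hCP hAP hA
      rwa [hacomm] at this
    · exact cross _ _ ha0 hDb0 haP hDbN
    · exact cross' _ _ hb0 hCa0 hbN hCaP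
    · have := posP1 hD0 hB0 hDN hBN hB
      rwa [hbcomm] at this
  -- C3 : (z - u) ⊥ y
  have C3 : |z - (a - b)| ⊓ |y| = 0 := by
    rw [hzu_eq, hzu_abs, ← posPart_add_negPart y]
    refine inf4 hCa0 hDb0 hA0 hB0 ?_ ?_ ?_ ?_
    · exact posP2 hA0 hAP hCP hA
    · exact cross _ _ hCa0 hB0 hCaP hBN
    · exact cross' _ _ hDb0 hA0 hDbN hAP
    · exact posP2 hB0 hBN hDN hB
  -- C4 : (y - u) ⊥ z
  have C4 : |y - (a - b)| ⊓ |z| = 0 := by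
    rw [hyu_eq, hyu_abs, ← posPart_add_negPart z]
    refine inf4 hAa0 hBb0 hC0 hD0 ?_ ?_ ?_ ?_
    · have := posP2 hC0 hCP hAP hC
      rwa [hacomm] at this
    · exact cross _ _ hAa0 hD0 hAaP hDN
    · exact cross' _ _ hBb0 hC0 hBbN hCP
    · have := posP2 hD0 hDN hBN hD2
      rwa [hbcomm] at this
  -- v = y + (z - u)
  have hsupP : y⁺ ⊔ z⁺ = y⁺ + z⁺ - a := by
    rw [eq_sub_iff_add_eq, ha_def, add_comm, inf_add_sup]
  have hsupN : y⁻ ⊔ z⁻ = y⁻ + z⁻ - b := by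
    rw [eq_sub_iff_add_eq, hb_def, add_comm, inf_add_sup]
  have hv_eq : y + (z - (a - b)) = (y⁺ ⊔ z⁺) - (y⁻ ⊔ z⁻) := by
    rw [hsupP, hsupN]
    conv_lhs => rw [← posPart_sub_negPart y, ← posPart_sub_negPart z]
    abel
  have hsP0 : (0:E) ≤ y⁺ ⊔ z⁺ := hA0.trans le_sup_left
  have hsN0 : (0:E) ≤ y⁻ ⊔ z⁻ := hB0.trans le_sup_left
  have hsPle : y⁺ ⊔ z⁺ ≤ x⁺ := sup_le hAP hCP
  have hsNle : y⁻ ⊔ z⁻ ≤ x⁻ := sup_le hBN hDN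
  obtain ⟨-, -, hv_abs⟩ := parts_of_disjoint hsP0 hsN0 (cross _ _ hsP0 hsN0 hsPle hsNle)
  have hxv_eq : x - ((y⁺ ⊔ z⁺) - (y⁻ ⊔ z⁻)) = (x⁺ - (y⁺ ⊔ z⁺)) - (x⁻ - (y⁻ ⊔ z⁻)) := by
    conv_lhs => rw [← posPart_sub_negPart x]
    abel
  have hxP0 : (0:E) ≤ x⁺ - (y⁺ ⊔ z⁺) := sub_nonneg.2 hsPle
  have hxN0 : (0:E) ≤ x⁻ - (y⁻ ⊔ z⁻) := sub_nonneg.2 hsNle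
  obtain ⟨-, -, hxv_abs⟩ := parts_of_disjoint hxP0 hxN0
    (cross _ _ hxP0 hxN0 (sub_le_self _ hsP0) (sub_le_self _ hsN0))
  have C5 : Fragment (y + (z - (a - b))) x := by
    show |y + (z - (a - b))| ⊓ |x - (y + (z - (a - b)))| = 0
    rw [hv_eq, hv_abs, hxv_eq, hxv_abs]
    refine inf4 hsP0 hsN0 hxP0 hxN0 ?_ ?_ ?_ ?_
    · exact posP3 hA0 hC0 hAP hCP hA hC
    · exact cross _ _ hsP0 hxN0 hsPle (sub_le_self _ hsN0)
    · exact cross' _ _ hsN0 hxP0 hsNle (sub_le_self _ hsP0)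
    · exact posP3 hB0 hD0 hBN hDN hB hD2
  -- fragments and membership in D
  have hzu_frag : Fragment (z - (a - b)) z := by
    show |z - (a - b)| ⊓ |z - (z - (a - b))| = 0
    have he : z - (z - (a - b)) = a - b := by abel
    rw [he, inf_comm]
    exact C2
  have hyu_frag : Fragment (y - (a - b)) y := by
    show |y - (a - b)| ⊓ |y - (y - (a - b))| = 0
    have he : y - (y - (a - b)) = a - b := by abel
    rw [he, inf_comm]
    exact C1
  have hzuD : z - (a - b) ∈ D := hD.1 z hzD _ hzu_frag
  have hyuD : y - (a - b) ∈ D := hD.1 y hyD _ hyu_frag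
  have hd_y_zu : VDisjoint y (z - (a - b)) := by
    show |y| ⊓ |z - (a - b)| = 0
    rw [inf_comm]; exact C3
  have hd_z_yu : VDisjoint z (y - (a - b)) := by
    show |z| ⊓ |y - (a - b)| = 0
    rw [inf_comm]; exact C4
  have hvD : y + (z - (a - b)) ∈ D := hD.2 y hyD _ hzuD hd_y_zu
  refine ⟨y + (z - (a - b)), C5, hvD, ?_, ?_⟩
  · rw [hToa y hyD _ hzuD hd_y_zu]
    exact le_add_of_nonneg_right (hTpos _ hzuD)
  · have hcomm : y + (z - (a - b)) = z + (y - (a - b)) := by abel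
    rw [hcomm, hToa z hzD _ hyuD hd_z_yu]
    exact le_add_of_nonneg_right (hTpos _ hyuD)


end VL
end
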